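/- Let u: ℝ² → ℝ be a convex function such that (i) for each k, the subgradient measure |∂u(d_k)| = α_k with α_k > 0 and Σ_k α_k = π, and (ii) ∂u(ℝ²) ⊆ closed unit ball B(0,1). Then the subgradient of u has Lebesgue measure zero away from the points d_k: |∂u(ℝ² \ ∪_k {d_k})| = 0. -/

import Mathlib

open RealInnerProductSpace MeasureTheory

/-- The subgradient of `u` at a point `x`. -/
def SG (u : EuclideanSpace ℝ (Fin 2) → ℝ) (x : EuclideanSpace ℝ (Fin 2)) :
    Set (EuclideanSpace ℝ (Fin 2)) :=
  {p | ∀ z, u x + ⟪p, z - x⟫ ≤ u z}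

/-- The subgradient image of a set `E`. -/
def SGs (u : EuclideanSpace ℝ (Fin 2) → ℝ) (E : Set (EuclideanSpace ℝ (Fin 2))) :
    Set (EuclideanSpace ℝ (Fin 2)) :=
  ⋃ x ∈ E, SG u x

/-- Monotonicity of the subgradient. -/
lemma SG_mono {u : EuclideanSpace ℝ (Fin 2) → ℝ} {x y p q : EuclideanSpace ℝ (Fin 2)}
    (hp : p ∈ SG u x) (hq : q ∈ SG u y) : 0 ≤ ⟪p - q, x - y⟫ := by
  have h1 := hp y
  have h2 := hq x
  simp only [inner_sub_left, inner_sub_right] at *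
  linarith

/-- The interior of a subgradient set at `x` doesn't meet any subgradient set at `y ≠ x`. -/
lemma interior_SG_disjoint {u : EuclideanSpace ℝ (Fin 2) → ℝ} {x y : EuclideanSpace ℝ (Fin 2)}
    (hxy : x ≠ y) {p : EuclideanSpace ℝ (Fin 2)} (hp : p ∈ interior (SG u x)) :
    p ∉ SG u y := by
  intro hpy
  obtain ⟨ε, hε, hball⟩ := Metric.isOpen_iff.1 isOpen_interior p hp
  have hne : ‖x - y‖ ≠ 0 := by
    simp only [norm_ne_zero_iff, sub_ne_zero]; exact hxy
  have hnorm : 0 < ‖x - y‖ := lt_of_le_of_ne (norm_nonneg _) (Ne.symm hne)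
  set c : ℝ := ε / (2 * ‖x - y‖) with hc
  have hcpos : 0 < c := div_pos hε (by positivity)
  set p' : EuclideanSpace ℝ (Fin 2) := p + c • (y - x) with hp'
  have hmem : p' ∈ Metric.ball p ε := by
    rw [Metric.mem_ball, dist_eq_norm]
    have : p' - p = c • (y - x) := by simp [hp']
    rw [this, norm_smul]
    have : ‖y - x‖ = ‖x - y‖ := by rw [← neg_sub, norm_neg]
    rw [this, Real.norm_eq_abs, abs_of_pos hcpos, hc]
    rw [div_mul_eq_mul_div, mul_comm 2 ‖x - y‖, ← div_div, mul_div_assoc,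
      div_self hne, mul_one]
    linarith
  have hp'x : p' ∈ SG u x := interior_subset (hball hmem)
  have hmono := SG_mono hp'x hpy
  have hcalc : ⟪p' - p, x - y⟫ = -(c * ‖x - y‖ ^ 2) := by
    have : p' - p = c • (y - x) := by simp [hp']
    rw [this, real_inner_smul_left]
    have : (y - x : EuclideanSpace ℝ (Fin 2)) = -(x - y) := by abel
    rw [this, inner_neg_left, real_inner_self_eq_norm_sq]
    ring
  rw [hcalc] at hmono
  have hpos : 0 < c * ‖x - y‖ ^ 2 := by positivity
  linarith

lemma SG_isClosed (u : EuclideanSpace ℝ (Fin 2) → ℝ) (x : EuclideanSpace ℝ (Fin 2)) :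
    IsClosed (SG u x) := by
  have : SG u x = ⋂ z, {p : EuclideanSpace ℝ (Fin 2) | u x + ⟪p, z - x⟫ ≤ u z} := by
    ext p; simp [SG, Set.mem_iInter]
  rw [this]
  exact isClosed_iInter fun z => isClosed_le (continuous_const.add (Continuous.inner continuous_id continuous_const)) continuous_const

lemma SG_convex (u : EuclideanSpace ℝ (Fin 2) → ℝ) (x : EuclideanSpace ℝ (Fin 2)) :
    Convex ℝ (SG u x) := by
  intro p hp q hq a b ha hb hab
  intro z
  have h1 := hp z
  have h2 := hq z
  have : ⟪a • p + b • q, z - x⟫ = a * ⟪p, z - x⟫ + b * ⟪q, z - x⟫ := by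
    rw [inner_add_left, real_inner_smul_left, real_inner_smul_left]
  rw [this]
  have e1 := mul_le_mul_of_nonneg_left h1 ha
  have e2 := mul_le_mul_of_nonneg_left h2 hb
  have e3 : a * u x + b * u x = u x := by rw [← add_mul, hab, one_mul]
  have e4 : a * u z + b * u z = u z := by rw [← add_mul, hab, one_mul]
  nlinarith [e1, e2, e3, e4]

theorem stmt6 (u : EuclideanSpace ℝ (Fin 2) → ℝ) (hu : ConvexOn ℝ Set.univ u)
    (K : ℕ) (d : Fin K → EuclideanSpace ℝ (Fin 2)) (hd : Function.Injective d)
    (α : Fin K → ℝ) (hα : ∀ k, 0 < α k) (hsum : ∑ k, α k = Real.pi)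
    (hmass : ∀ k, volume (SG u (d k)) = ENNReal.ofReal (α k))
    (hsub : SGs u Set.univ ⊆ Metric.closedBall 0 1) :
    volume (SGs u (Set.univ \ Set.range d)) = 0 := by
  -- volume of interior of each SG u (d k) equals α k
  have hint : ∀ k, volume (interior (SG u (d k))) = ENNReal.ofReal (α k) := by
    intro k
    have hfr : volume (frontier (SG u (d k))) = 0 :=
      (SG_convex u (d k)).addHaar_frontier volume
    have hsubset : SG u (d k) ⊆ interior (SG u (d k)) ∪ frontier (SG u (d k)) := by
      intro p hp
      have h : p ∈ closure (SG u (d k)) := subset_closure hp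
      rw [closure_eq_interior_union_frontier] at h
      exact h
    have h1 : volume (SG u (d k)) ≤ volume (interior (SG u (d k))) := by
      calc volume (SG u (d k)) ≤ volume (interior (SG u (d k)) ∪ frontier (SG u (d k))) :=
            measure_mono hsubset
        _ ≤ volume (interior (SG u (d k))) + volume (frontier (SG u (d k))) :=
            measure_union_le _ _
        _ = volume (interior (SG u (d k))) := by rw [hfr, add_zero]
    have h2 : volume (interior (SG u (d k))) ≤ volume (SG u (d k)) :=
      measure_mono interior_subset
    rw [← hmass k]
    exact le_antisymm h2 h1
  set U : Set (EuclideanSpace ℝ (Fin 2)) := ⋃ k, interior (SG u (d k)) with hU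
  -- U has volume π
  have hUmeas : MeasurableSet U := MeasurableSet.iUnion fun k => isOpen_interior.measurableSet
  have hUvol : volume U = ENNReal.ofReal Real.pi := by
    have hdisj : Pairwise (Function.onFun Disjoint fun k => interior (SG u (d k)))  := by
      intro i j hij
      rw [Function.onFun, Set.disjoint_left]
      intro p hpi hpj
      exact interior_SG_disjoint (fun h => hij (hd h)) hpi (interior_subset hpj)
    rw [hU, measure_iUnion hdisj fun k => isOpen_interior.measurableSet]
    simp_rw [hint]
    rw [tsum_fintype, ← ENNReal.ofReal_sum_of_nonneg (fun k _ => (hα k).le), hsum]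
  -- U is inside the closed ball
  have hUsub : U ⊆ Metric.closedBall 0 1 := by
    intro p hp
    obtain ⟨k, hk⟩ := Set.mem_iUnion.1 hp
    apply hsub
    exact Set.mem_biUnion (Set.mem_univ (d k)) (interior_subset hk)
  -- volume of the ball
  have hball : volume (Metric.closedBall (0 : EuclideanSpace ℝ (Fin 2)) 1)
      = ENNReal.ofReal Real.pi := by
    rw [EuclideanSpace.volume_closedBall]
    simp only [Fintype.card_fin]
    norm_num [Real.Gamma_two, Real.sq_sqrt Real.pi_nonneg]
  -- target set is inside ball minus U
  have htarget : SGs u (Set.univ \ Set.range d) ⊆ Metric.closedBall 0 1 \ U := by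
    intro p hp
    obtain ⟨x, hx, hpx⟩ := Set.mem_iUnion₂.1 hp
    constructor
    · exact hsub (Set.mem_biUnion (Set.mem_univ x) hpx)
    · intro hpU
      obtain ⟨k, hk⟩ := Set.mem_iUnion.1 hpU
      have hxd : d k ≠ x := fun h => hx.2 ⟨k, h⟩
      exact interior_SG_disjoint hxd hk hpx
  have : volume (Metric.closedBall (0 : EuclideanSpace ℝ (Fin 2)) 1 \ U) = 0 := by
    rw [measure_diff hUsub hUmeas.nullMeasurableSet (by rw [hUvol]; exact ENNReal.ofReal_ne_top),
      hUvol, hball, tsub_self]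
  exact le_antisymm (le_trans (measure_mono htarget) this.le) zero_le
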